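/- One-step extension: let n ≥ 3 and 2 ≤ k ≤ n − 1. Let A, B ∈ FreeGroup (Fin n) be supported in the first n − 1 generators, such that kill_S A = 1 ↔ |S ∩ {0, …, n−2}| ≥ k and kill_S B = 1 ↔ |S ∩ {0, …, n−2}| ≥ k − 1 for every S ⊆ Fin n (that is, A solves the k-out-of-(n−1) puzzle and B solves the (k−1)-out-of-(n−1) puzzle on the first n − 1 nails). Then the word w = A · x_{n-1} · B · A⁻¹ · x_{n-1}⁻¹ is a solution to the k-out-of-n picture-hanging puzzle. -/

import Mathlib

/-- The removal homomorphism: kills the generators with index in `S`. -/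
def kill {n : ℕ} (S : Finset (Fin n)) : FreeGroup (Fin n) →* FreeGroup (Fin n) :=
  FreeGroup.lift fun i => if i ∈ S then 1 else FreeGroup.of i

/-- `w` is a solution to the `k`-out-of-`n` picture-hanging puzzle (Demaine convention). -/
def IsSolution {n : ℕ} (k : ℕ) (w : FreeGroup (Fin n)) : Prop :=
  ∀ S : Finset (Fin n),
    (k ≤ S.card → kill S w = 1) ∧ (S.card < k → kill S w ≠ 1)

lemma kill_of {n : ℕ} (S : Finset (Fin n)) (i : Fin n) :
    kill S (FreeGroup.of i) = if i ∈ S then 1 else FreeGroup.of i :=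
  FreeGroup.lift_apply_of

lemma kill_comp {n : ℕ} (S T : Finset (Fin n)) :
    (kill T).comp (kill S) = kill (S ∪ T) := by
  apply FreeGroup.ext_hom
  intro a
  simp only [MonoidHom.comp_apply, kill_of]
  by_cases hs : a ∈ S
  · simp [hs]
  · by_cases ht : a ∈ T <;> simp [hs, ht, kill_of]

/-- Letters of elements of the closure of a set of generators lie in that set. -/
lemma support_of_mem_closure {α : Type*} [DecidableEq α] (T : Set α) (a : FreeGroup α)
    (ha : a ∈ Subgroup.closure (FreeGroup.of '' T)) :
    ∀ p ∈ a.toWord, p.1 ∈ T := by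
  induction ha using Subgroup.closure_induction with
  | mem x hx =>
    obtain ⟨j, hj, rfl⟩ := hx
    intro p hp
    rw [FreeGroup.toWord_of] at hp
    simp at hp
    simp [hp, hj]
  | one => simp
  | mul x y _ _ ihx ihy =>
    intro p hp
    have := FreeGroup.toWord_mul_sublist x y
    have hp' := this.mem hp
    rcases List.mem_append.1 hp' with h | h
    · exact ihx p h
    · exact ihy p h
  | inv x _ ihx =>
    intro p hp
    rw [FreeGroup.toWord_inv, FreeGroup.invRev] at hp
    rw [List.mem_reverse, List.mem_map] at hp
    obtain ⟨q, hq, rfl⟩ := hp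
    exact ihx q hq

lemma toWord_singleton_mul {α : Type*} [DecidableEq α] (c : α) (b : Bool) (u : FreeGroup α)
    (h : ∀ p ∈ u.toWord, p.1 ≠ c) :
    (FreeGroup.mk [(c, b)] * u).toWord = (c, b) :: u.toWord := by
  conv_lhs => rw [← FreeGroup.mk_toWord (x := u)]
  rw [FreeGroup.mul_mk, FreeGroup.toWord_mk]
  show FreeGroup.reduce ((c, b) :: u.toWord) = _
  rw [FreeGroup.reduce.cons, FreeGroup.reduce_toWord]
  cases hu : u.toWord with
  | nil => simp
  | cons q L =>
    have hq : q.1 ≠ c := h q (by rw [hu]; exact List.mem_cons_self)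
    simp only []
    rw [if_neg]
    rintro ⟨h1, -⟩
    exact hq h1.symm

lemma kill_mem_closure {n : ℕ} (S : Finset (Fin n)) (T : Set (Fin n)) (x : FreeGroup (Fin n))
    (hx : x ∈ Subgroup.closure (FreeGroup.of '' T)) :
    kill S x ∈ Subgroup.closure (FreeGroup.of '' T) := by
  induction hx using Subgroup.closure_induction with
  | mem y hy =>
    obtain ⟨j, hj, rfl⟩ := hy
    rw [kill_of]
    split_ifs
    · exact Subgroup.one_mem _
    · exact Subgroup.subset_closure ⟨j, hj, rfl⟩
  | one => rw [map_one]; exact Subgroup.one_mem _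
  | mul y z _ _ ihy ihz => rw [map_mul]; exact Subgroup.mul_mem _ ihy ihz
  | inv y _ ihy => rw [map_inv]; exact Subgroup.inv_mem _ ihy

/-- A nontrivial element avoiding the letter `c` does not commute with `of c`. -/
lemma commutator_ne_one {α : Type*} [DecidableEq α] (a : FreeGroup α) (c : α)
    (ha : a ≠ 1) (hsupp : ∀ p ∈ a.toWord, p.1 ≠ c) :
    a * FreeGroup.of c ≠ FreeGroup.of c * a := by
  intro hcomm
  have hsupp' : ∀ p ∈ (a⁻¹).toWord, p.1 ≠ c := by
    intro p hp
    rw [FreeGroup.toWord_inv, FreeGroup.invRev] at hp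
    rw [List.mem_reverse, List.mem_map] at hp
    obtain ⟨q, hq, rfl⟩ := hp
    exact hsupp q hq
  -- of c = mk [(c, true)], (of c)⁻¹ = mk [(c, false)]
  have hofinv : (FreeGroup.of c)⁻¹ = FreeGroup.mk [(c, false)] := by
    show (FreeGroup.mk [(c, true)])⁻¹ = _
    rw [FreeGroup.inv_mk]; rfl
  -- toWord of (of c * a) = (c,true) :: a.toWord
  have h1 : (FreeGroup.of c * a).toWord = (c, true) :: a.toWord :=
    toWord_singleton_mul c true a hsupp
  -- toWord of ((of c)⁻¹ * a⁻¹) = (c,false) :: a⁻¹.toWord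
  have h2 : ((FreeGroup.of c)⁻¹ * a⁻¹).toWord = (c, false) :: (a⁻¹).toWord := by
    rw [hofinv]; exact toWord_singleton_mul c false a⁻¹ hsupp'
  -- but (of c * a)⁻¹ = (a * of c)⁻¹ = (of c)⁻¹ * a⁻¹
  have h3 : (FreeGroup.of c * a)⁻¹ = (FreeGroup.of c)⁻¹ * a⁻¹ := by
    rw [← hcomm, mul_inv_rev]
  have h4 : ((FreeGroup.of c * a)⁻¹).toWord =
      FreeGroup.invRev ((c, true) :: a.toWord) := by
    rw [FreeGroup.toWord_inv, h1]
  rw [h3, h2] at h4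
  rw [FreeGroup.invRev] at h4
  simp only [List.map_cons, List.reverse_cons] at h4
  have hinv : (a⁻¹).toWord = (List.map (fun g : α × Bool => (g.1, !g.2)) a.toWord).reverse := by
    rw [FreeGroup.toWord_inv, FreeGroup.invRev]
  rw [hinv] at h4
  -- h4 : (c,false) :: M = M ++ [(c,false)] with M the reversed mapped word, nonempty
  set M := (List.map (fun g : α × Bool => (g.1, !g.2)) a.toWord).reverse with hM
  have hMne : M ≠ [] := by
    intro h
    apply ha
    rw [← FreeGroup.toWord_eq_nil_iff, ← List.length_eq_zero_iff]
    have := congrArg List.length h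
    simpa [hM] using this
  cases hMc : M with
  | nil => exact hMne hMc
  | cons q L =>
    rw [hMc] at h4
    have : (c, false) = q := (List.cons_eq_cons.mp h4).1
    have hqmem : q ∈ M := by rw [hMc]; exact List.mem_cons_self
    rw [hM, List.mem_reverse, List.mem_map] at hqmem
    obtain ⟨r, hr, hrq⟩ := hqmem
    apply hsupp r hr
    rw [← this] at hrq
    exact congrArg Prod.fst hrq

theorem one_step_extension (n k : ℕ) (hn : 3 ≤ n) (hk₁ : 2 ≤ k) (hk₂ : k ≤ n - 1)
    (A B : FreeGroup (Fin n))
    (hAsupp : A ∈ Subgroup.closure (FreeGroup.of '' {j : Fin n | (j : ℕ) < n - 1}))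
    (hBsupp : B ∈ Subgroup.closure (FreeGroup.of '' {j : Fin n | (j : ℕ) < n - 1}))
    (hA : ∀ S : Finset (Fin n),
      kill S A = 1 ↔ k ≤ (S.filter (fun j : Fin n => (j : ℕ) < n - 1)).card)
    (hB : ∀ S : Finset (Fin n),
      kill S B = 1 ↔ k - 1 ≤ (S.filter (fun j : Fin n => (j : ℕ) < n - 1)).card) :
    IsSolution k
      (A * FreeGroup.of (⟨n - 1, by omega⟩ : Fin n) * B * A⁻¹ *
        (FreeGroup.of (⟨n - 1, by omega⟩ : Fin n))⁻¹) := by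
  set last : Fin n := ⟨n - 1, by omega⟩ with hlast
  intro S
  set m := (S.filter (fun j : Fin n => (j : ℕ) < n - 1)).card with hm
  -- cardinality relation
  have hcard : S.card = if last ∈ S then m + 1 else m := by
    have hsplit := Finset.card_filter_add_card_filter_not
      (s := S) (p := fun j : Fin n => (j : ℕ) < n - 1)
    have hneg : S.filter (fun j : Fin n => ¬ (j : ℕ) < n - 1) =
        if last ∈ S then {last} else ∅ := by
      split_ifs with h
      · ext j
        simp only [Finset.mem_filter, Finset.mem_singleton, not_lt]
        constructor
        · rintro ⟨hjS, hj⟩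
          have : (j : ℕ) = n - 1 := le_antisymm (by omega) hj
          exact Fin.ext this
        · rintro rfl; exact ⟨h, le_refl _⟩
      · ext j
        simp only [Finset.mem_filter, Finset.notMem_empty, iff_false, not_and, not_not]
        intro hjS
        by_contra hj
        have hjn : (j : ℕ) < n := j.isLt
        have : j = last := Fin.ext (by simp only [hlast]; omega)
        exact h (this ▸ hjS)
    rw [hneg] at hsplit
    split_ifs at hsplit ⊢ with h
    · simp at hsplit; omega
    · simp at hsplit; omega
  have hlast_not : ¬ ((last : ℕ) < n - 1) := by simp [hlast]
  have hkt : kill S (FreeGroup.of last) = if last ∈ S then 1 else FreeGroup.of last :=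
    kill_of S last
  set a := kill S A with ha
  set b := kill S B with hb
  by_cases hL : last ∈ S
  · -- t killed
    have hkt1 : kill S (FreeGroup.of last) = 1 := by rw [hkt, if_pos hL]
    have hw : kill S (A * FreeGroup.of last * B * A⁻¹ * (FreeGroup.of last)⁻¹)
        = a * b * a⁻¹ := by
      simp [map_mul, map_inv, hkt1, ← ha, ← hb]
    rw [hcard, if_pos hL]
    constructor
    · intro hk
      have : k - 1 ≤ m := by omega
      have hb1 : b = 1 := (hB S).mpr this
      rw [hw, hb1]; group
    · intro hk
      have : ¬ (k - 1 ≤ m) := by omega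
      have hb1 : b ≠ 1 := fun h => this ((hB S).mp h)
      rw [hw]
      intro h
      apply hb1
      have : a⁻¹ * (a * b * a⁻¹) * a = a⁻¹ * 1 * a := by rw [h]
      simpa [mul_assoc] using this
  · -- t survives
    have hkt1 : kill S (FreeGroup.of last) = FreeGroup.of last := by rw [hkt, if_neg hL]
    have hw : kill S (A * FreeGroup.of last * B * A⁻¹ * (FreeGroup.of last)⁻¹)
        = a * FreeGroup.of last * b * a⁻¹ * (FreeGroup.of last)⁻¹ := by
      simp [map_mul, map_inv, hkt1, ← ha, ← hb]
    rw [hcard, if_neg hL]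
    constructor
    · intro hk
      have ha1 : a = 1 := (hA S).mpr hk
      have hb1 : b = 1 := (hB S).mpr (by omega)
      rw [hw, ha1, hb1]; group
    · intro hk
      rw [hw]
      by_cases hbm : k - 1 ≤ m
      · -- b = 1, a ≠ 1 : commutator case
        have hb1 : b = 1 := (hB S).mpr hbm
        have ha1 : a ≠ 1 := fun h => absurd ((hA S).mp h) (by omega)
        rw [hb1, mul_one]
        have hamem : a ∈ Subgroup.closure (FreeGroup.of '' {j : Fin n | (j : ℕ) < n - 1}) :=
          kill_mem_closure S _ A hAsupp
        have hletters : ∀ p ∈ a.toWord, p.1 ≠ last := by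
          intro p hp he
          exact hlast_not (he ▸ support_of_mem_closure _ a hamem p hp)
        intro hcontra
        apply commutator_ne_one a last ha1 hletters
        have : a * FreeGroup.of last * a⁻¹ * (FreeGroup.of last)⁻¹ *
            (FreeGroup.of last * a) = 1 * (FreeGroup.of last * a) := by rw [hcontra]
        rw [one_mul] at this
        rw [← this]
        group
      · -- b ≠ 1 : kill last further
        have hcomp : ∀ x, kill {last} (kill S x) = kill (S ∪ {last}) x := fun x =>
          DFunLike.congr_fun (kill_comp S {last}) x
        set S' : Finset (Fin n) := S ∪ {last} with hS'
        have hmS' : (S'.filter (fun j : Fin n => (j : ℕ) < n - 1)).card = m := by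
          rw [hS', Finset.filter_union]
          rw [Finset.filter_singleton, if_neg hlast_not, Finset.union_empty]
        have hb' : kill S' B ≠ 1 := by
          intro h
          exact hbm (hmS' ▸ (hB S').mp h)
        intro hcontra
        apply hb'
        have h1 : kill S' (A * FreeGroup.of last * B * A⁻¹ * (FreeGroup.of last)⁻¹) = 1 := by
          rw [← hcomp, hw, hcontra, map_one]
        have hlastS' : last ∈ S' := by simp [hS']
        have hktS' : kill S' (FreeGroup.of last) = 1 := by
          rw [kill_of, if_pos hlastS']
        simp only [map_mul, map_inv, hktS'] at h1
        set a' := kill S' A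
        set b' := kill S' B
        have h2 : a' * b' * a'⁻¹ = 1 := by
          rw [← h1]; group
        have : a'⁻¹ * (a' * b' * a'⁻¹) * a' = a'⁻¹ * 1 * a' := by rw [h2]
        simpa [mul_assoc] using this
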